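/- arXiv:math/0002238 — 2 statements merged into one kernel-verified Lean document; each statement's English description precedes it below -/
import Mathlib

section
/- In Q_n, for any subset A = {i_1,...,i_r} of {1,...,n}, the element r(A) := z_{i_1} + z_{{i_1},i_2} + z_{{i_1,i_2},i_3} + ... + z_{{i_1,...,i_{r-1}},i_r} is independent of the chosen ordering of A. -/
namespace QnPaper

/-- The defining relations of the quadratic algebra `Q_n`:
for `A ⊆ {1,…,n}` and distinct `i, j ∉ A`,
`z_{A∪{i},j} + z_{A,i} = z_{A∪{j},i} + z_{A,j}` and
`z_{A∪{i},j} * z_{A,i} = z_{A∪{j},i} * z_{A,j}`. -/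
inductive QRel (k : Type) [Field k] (n : ℕ) :
    FreeAlgebra k (Finset (Fin n) × Fin n) → FreeAlgebra k (Finset (Fin n) × Fin n) → Prop
  | add_rel (A : Finset (Fin n)) (i j : Fin n) (hi : i ∉ A) (hj : j ∉ A) (hij : i ≠ j) :
      QRel k n (FreeAlgebra.ι k (insert i A, j) + FreeAlgebra.ι k (A, i))
        (FreeAlgebra.ι k (insert j A, i) + FreeAlgebra.ι k (A, j))
  | mul_rel (A : Finset (Fin n)) (i j : Fin n) (hi : i ∉ A) (hj : j ∉ A) (hij : i ≠ j) :
      QRel k n (FreeAlgebra.ι k (insert i A, j) * FreeAlgebra.ι k (A, i))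
        (FreeAlgebra.ι k (insert j A, i) * FreeAlgebra.ι k (A, j))

/-- The quadratic algebra `Q_n`. -/
abbrev Q (k : Type) [Field k] (n : ℕ) := RingQuot (QRel k n)

/-- The generator `z_{A,i}` of `Q_n` (only meaningful when `i ∉ A`). -/
def z (k : Type) [Field k] (n : ℕ) (A : Finset (Fin n)) (i : Fin n) : Q k n :=
  RingQuot.mkAlgHom k (QRel k n) (FreeAlgebra.ι k (A, i))

/-- `rAux s [i₁,…,i_r] = z_{s,i₁} + z_{s∪{i₁},i₂} + ⋯`. -/
def rAux (k : Type) [Field k] (n : ℕ) (s : Finset (Fin n)) : List (Fin n) → Q k n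
  | [] => 0
  | a :: l => z k n s a + rAux k n (insert a s) l

/-- `r(A) = z_{A,∅}`, computed using the increasing ordering of `A`. -/
def rFin (k : Type) [Field k] (n : ℕ) (A : Finset (Fin n)) : Q k n :=
  rAux k n ∅ (A.sort (· ≤ ·))

/-- `u(B) = z_{∅,B} = ∑_{D ⊆ B} (-1)^{|B|-|D|} r(D)`. -/
def uFin (k : Type) [Field k] (n : ℕ) (B : Finset (Fin n)) : Q k n :=
  ∑ D ∈ B.powerset, (-1 : Q k n) ^ (B.card - D.card) * rFin k n D

lemma z_add_rel (k : Type) [Field k] (n : ℕ) (A : Finset (Fin n)) (i j : Fin n)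
    (hi : i ∉ A) (hj : j ∉ A) (hij : i ≠ j) :
    z k n (insert i A) j + z k n A i = z k n (insert j A) i + z k n A j := by
  have := RingQuot.mkAlgHom_rel k (s := QRel k n) (QRel.add_rel A i j hi hj hij)
  simpa [z, map_add] using this

lemma rAux_perm (k : Type) [Field k] (n : ℕ) {l₁ l₂ : List (Fin n)} (h : l₁.Perm l₂) :
    l₁.Nodup → ∀ s : Finset (Fin n), (∀ a ∈ l₁, a ∉ s) →
      rAux k n s l₁ = rAux k n s l₂ := by
  induction h with
  | nil => intros; rfl
  | cons a h ih =>
      intro hnd s hs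
      simp only [rAux]
      rw [ih hnd.of_cons (insert a s) (fun b hb => by
        simp only [Finset.mem_insert, not_or]
        exact ⟨fun e => (List.nodup_cons.mp hnd).1 (e ▸ hb), hs b (List.mem_cons_of_mem _ hb)⟩)]
  | swap a b l =>
      intro hnd s hs
      simp only [rAux]
      have hab : b ≠ a := (List.nodup_cons.mp hnd).1 ∘ (by simp [·])
      have hbs : b ∉ s := hs b (by simp)
      have has : a ∉ s := hs a (by simp)
      rw [Finset.insert_comm a b s, ← add_assoc, ← add_assoc,
        add_comm (z k n s b) (z k n (insert b s) a), z_add_rel k n s b a hbs has hab,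
        add_comm (z k n (insert a s) b) (z k n s a)]
  | trans h₁ h₂ ih₁ ih₂ =>
      intro hnd s hs
      rw [ih₁ hnd s hs, ih₂ (h₁.nodup hnd) s (fun a ha => hs a (h₁.mem_iff.mpr ha))]

/-- `r(A)` is independent of the chosen ordering of `A`. -/
theorem stmt6 (k : Type) [Field k] (n : ℕ) (l₁ l₂ : List (Fin n))
    (h₁ : l₁.Nodup) (h₂ : l₂.Nodup) (h : l₁.toFinset = l₂.toFinset) :
    rAux k n ∅ l₁ = rAux k n ∅ l₂ := by
  exact rAux_perm k n (List.perm_of_nodup_nodup_toFinset_eq h₁ h₂ h) h₁ ∅ (by simp)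
end QnPaper
end

section
/- In Q_n, with y_i = z_{{1,...,i-1},i}, the element Λ_k({1,...,n}) equals the sum ∑_{n ≥ i_1 > i_2 > ... > i_k ≥ 1} y_{i_1}·y_{i_2}·...·y_{i_k}. -/
namespace QnPaper

/-- `Λ_m` built along a list: `Λ_0 = 1`, `Λ_m(∅) = 0` for `m ≥ 1`, and
`Λ_m(A∪{a}) = Λ_m(A) + (Λ_1(A∪{a}) - Λ_1(A))·Λ_{m-1}(A)`, where `Λ_1 = r`. -/
def LamL (k : Type) [Field k] (n : ℕ) : ℕ → List (Fin n) → Q k n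
  | 0, _ => 1
  | _ + 1, [] => 0
  | m + 1, a :: l =>
      LamL k n (m + 1) l
        + (rFin k n (insert a l.toFinset) - rFin k n l.toFinset) * LamL k n m l

/-- `Λ_m(A)`, computed by adding the elements of `A` in increasing order. -/
def Lam (k : Type) [Field k] (n : ℕ) (m : ℕ) (A : Finset (Fin n)) : Q k n :=
  LamL k n m (A.sort (· ≤ ·))
/-- `y_i = z_{{1,…,i-1},i}`. -/
def y (k : Type) [Field k] (n : ℕ) (i : Fin n) : Q k n := z k n (Finset.Iio i) i

variable (k : Type) [Field k] (n : ℕ)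

lemma zadd {A : Finset (Fin n)} {i j : Fin n} (hi : i ∉ A) (hj : j ∉ A) (hij : i ≠ j) :
    z k n (insert i A) j + z k n A i = z k n (insert j A) i + z k n A j := by
  have := RingQuot.mkAlgHom_rel k (QRel.add_rel (k := k) (n := n) A i j hi hj hij)
  simpa [z, map_add] using this

lemma zmul {A : Finset (Fin n)} {i j : Fin n} (hi : i ∉ A) (hj : j ∉ A) (hij : i ≠ j) :
    z k n (insert i A) j * z k n A i = z k n (insert j A) i * z k n A j := by
  have := RingQuot.mkAlgHom_rel k (QRel.mul_rel (k := k) (n := n) A i j hi hj hij)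
  simpa [z, map_mul] using this



variable (k : Type) [Field k] (n : ℕ)

lemma rAux_perm_s12 : ∀ {L L' : List (Fin n)}, L.Perm L' → ∀ (s : Finset (Fin n)),
    L.Nodup → (∀ b ∈ L, b ∉ s) → rAux k n s L = rAux k n s L' := by
  intro L L' h
  induction h with
  | nil => intro s _ _; rfl
  | cons x h ih =>
      intro s hnd hdis
      simp only [rAux]
      rw [ih (insert x s) (List.nodup_cons.mp hnd).2]
      intro b hb
      simp only [Finset.mem_insert, not_or]
      exact ⟨fun hbx => (List.nodup_cons.mp hnd).1 (hbx ▸ hb),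
        hdis b (List.mem_cons_of_mem _ hb)⟩
  | swap x y L =>
      intro s hnd hdis
      have hxs : x ∉ s := hdis x (by simp)
      have hys : y ∉ s := hdis y (by simp)
      have hxy : y ≠ x := by
        intro hh; exact (List.nodup_cons.mp hnd).1 (by simp [hh])
      simp only [rAux]
      rw [Finset.insert_comm]
      have h1 := zadd k n (A := s) hys hxs hxy
      have h2 : z k n s y + z k n (insert y s) x = z k n s x + z k n (insert x s) y := by
        rw [add_comm, h1, add_comm]
      rw [← add_assoc, ← add_assoc, h2]
  | trans h1 h2 ih1 ih2 =>
      intro s hnd hdis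
      rw [ih1 s hnd hdis, ih2 s (h1.nodup_iff.mp hnd) (fun b hb => hdis b (h1.mem_iff.mpr hb))]

lemma rAux_shift : ∀ (L : List (Fin n)) (s : Finset (Fin n)) (a : Fin n),
    L.Nodup → (∀ b ∈ L, b ∉ s) → a ∉ s → a ∉ L →
    rAux k n (insert a s) L = rAux k n s L + z k n (s ∪ L.toFinset) a - z k n s a := by
  intro L
  induction L with
  | nil => intro s a _ _ _ _; simp [rAux]
  | cons b L ih =>
      intro s a hnd hdis has haL
      have hbs : b ∉ s := hdis b (by simp)
      have hab : a ≠ b := by intro hh; exact haL (by simp [hh])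
      simp only [rAux]
      rw [Finset.insert_comm]
      rw [ih (insert b s) a (List.nodup_cons.mp hnd).2
        (fun c hc => by
          simp only [Finset.mem_insert, not_or]
          exact ⟨fun hcb => (List.nodup_cons.mp hnd).1 (hcb ▸ hc),
            hdis c (List.mem_cons_of_mem _ hc)⟩)
        (by simp [has, hab])
        (fun hc => haL (List.mem_cons_of_mem _ hc))]
      have hrel := zadd k n (A := s) has hbs hab
      have hset : insert b s ∪ L.toFinset = s ∪ (b :: L).toFinset := by
        simp [Finset.insert_union, List.toFinset_cons, Finset.union_insert]
      rw [hset]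
      -- goal: z (insert a s) b + (rAux (insert b s) L + z (s ∪ (b::L).toFinset) a - z (insert b s) a)
      --     = z s b + rAux (insert b s) L + z (s ∪ (b::L).toFinset) a - z s a
      have : z k n (insert a s) b - z k n (insert b s) a = z k n s b - z k n s a := by
        have := zadd k n (A := s) has hbs hab
        abel_nf
        linear_combination (norm := abel) this
      abel_nf
      abel_nf at this
      linear_combination (norm := abel) this



lemma rFin_insert {B : Finset (Fin n)} {a : Fin n} (ha : a ∉ B) :
    rFin k n (insert a B) = rFin k n B + z k n B a := by
  have hperm : ((insert a B).sort (· ≤ ·)).Perm (a :: B.sort (· ≤ ·)) := by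
    apply List.perm_of_nodup_nodup_toFinset_eq (Finset.sort_nodup _ _)
    · exact List.nodup_cons.mpr ⟨by simpa using ha, Finset.sort_nodup _ _⟩
    · simp
  rw [rFin, rAux_perm_s12 k n hperm ∅ (Finset.sort_nodup _ _) (by simp)]
  simp only [rAux]
  rw [rAux_shift k n _ ∅ a (Finset.sort_nodup _ _) (by simp) (by simp) (by simpa using ha)]
  simp [rFin]

lemma LamL_append : ∀ (L : List (Fin n)) (m : ℕ) (b : Fin n), L.Nodup → b ∉ L →
    LamL k n (m + 1) (L ++ [b]) =
      LamL k n (m + 1) L + z k n L.toFinset b * LamL k n m L := by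
  intro L
  induction L with
  | nil =>
      intro m b _ _
      simp only [List.nil_append, LamL, List.toFinset_nil]
      rw [rFin_insert k n (by simp)]
      simp [rFin]
  | cons a L ih =>
      intro m b hnd hbL
      have haL : a ∉ L := (List.nodup_cons.mp hnd).1
      have hndL : L.Nodup := (List.nodup_cons.mp hnd).2
      have hab : a ≠ b := fun hh => hbL (by simp [hh])
      have hbL' : b ∉ L := fun hh => hbL (by simp [hh])
      have haA : a ∉ L.toFinset := by simpa using haL
      have hbA : b ∉ L.toFinset := by simpa using hbL'
      have hset : (L ++ [b]).toFinset = insert b L.toFinset := by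
        rw [List.toFinset_append, Finset.union_comm]; simp
      have hdiff1 : rFin k n (insert a (L ++ [b]).toFinset) - rFin k n (L ++ [b]).toFinset
          = z k n (insert b L.toFinset) a := by
        rw [hset, rFin_insert k n (by simp [haA, hab])]
        abel
      have hdiff2 : rFin k n (insert a L.toFinset) - rFin k n L.toFinset
          = z k n L.toFinset a := by
        rw [rFin_insert k n haA]; abel
      have hdiff3 : rFin k n (insert b L.toFinset) - rFin k n L.toFinset
          = z k n L.toFinset b := by
        rw [rFin_insert k n hbA]; abel
      have hadd := zadd k n (A := L.toFinset) haA hbA hab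
      have hmul := zmul k n (A := L.toFinset) haA hbA hab
      cases m with
      | zero =>
          show LamL k n 1 ((a :: L) ++ [b]) = _
          rw [List.cons_append]
          show LamL k n 1 (L ++ [b]) + _ * LamL k n 0 (L ++ [b]) = _
          rw [hdiff1, ih 0 b hndL hbL']
          show _ = (LamL k n 1 L + _ * LamL k n 0 L) + z k n (a :: L).toFinset b * (1:Q k n)
          rw [hdiff2]
          simp only [LamL, List.toFinset_cons, mul_one]
          rw [add_assoc, add_assoc]
          congr 1
          linear_combination (norm := abel) -hadd
      | succ m =>
          rw [List.cons_append]
          show LamL k n (m+2) (L ++ [b]) + _ * LamL k n (m+1) (L ++ [b]) = _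
          rw [hdiff1, ih (m+1) b hndL hbL', ih m b hndL hbL']
          show _ = LamL k n (m+2) (a :: L) + z k n (a :: L).toFinset b * LamL k n (m+1) (a :: L)
          show _ = (LamL k n (m+2) L + _ * LamL k n (m+1) L)
              + z k n (a :: L).toFinset b * (LamL k n (m+1) L + _ * LamL k n m L)
          rw [hdiff2, List.toFinset_cons]
          set X := LamL k n (m+1) L
          set Y := LamL k n m L
          set W := LamL k n (m+2) L
          -- LHS: (W + q * X) + p' * (X + q * Y)
          -- RHS: (W + p * X) + q' * (X + p * Y)
          rw [mul_add, mul_add]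
          have e1 : z k n (insert b L.toFinset) a * (z k n L.toFinset b * Y)
              = z k n (insert a L.toFinset) b * (z k n L.toFinset a * Y) := by
            rw [← mul_assoc, ← mul_assoc, hmul]
          have e2 : z k n L.toFinset b * X + z k n (insert b L.toFinset) a * X
              = z k n L.toFinset a * X + z k n (insert a L.toFinset) b * X := by
            rw [← add_mul, ← add_mul, add_comm (z k n L.toFinset b), add_comm (z k n L.toFinset a), hadd]
          linear_combination (norm := abel) e1 + e2



lemma sort_insert_max {A : Finset (Fin n)} {b : Fin n} (h : ∀ x ∈ A, x < b) :
    Finset.sort (insert b A) (· ≤ ·) = Finset.sort A (· ≤ ·) ++ [b] := by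
  have hbA : b ∉ A := fun hb => lt_irrefl b (h b hb)
  have hperm : (Finset.sort (insert b A) (· ≤ ·)).Perm (Finset.sort A (· ≤ ·) ++ [b]) := by
    apply List.perm_of_nodup_nodup_toFinset_eq (Finset.sort_nodup _ _)
    · rw [List.nodup_append]
      exact ⟨Finset.sort_nodup _ _, List.nodup_singleton b,
        by intro x hx c hc hxc; simp only [List.mem_singleton] at hc; subst hc
           exact lt_irrefl c (h c (hxc ▸ (Finset.mem_sort _).mp hx))⟩
    · ext x; simp [or_comm]
  have hsorted : List.Pairwise (· ≤ ·) (Finset.sort A (· ≤ ·) ++ [b]) := by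
    rw [List.pairwise_append]
    refine ⟨Finset.pairwise_sort _ _, List.pairwise_singleton _ _, ?_⟩
    intro x hx c hc
    simp only [List.mem_singleton] at hc
    exact hc ▸ (h x ((Finset.mem_sort _).mp hx)).le
  exact List.Perm.eq_of_pairwise' (Finset.pairwise_sort _ _) hsorted hperm

lemma main_aux : ∀ (j : ℕ), j ≤ n → ∀ (m : ℕ),
    Lam k n m (Finset.univ.filter fun i : Fin n => i.val < j)
      = ∑ S ∈ Finset.powersetCard m (Finset.univ.filter fun i : Fin n => i.val < j),
          ((S.sort (· ≤ ·)).reverse.map (y k n)).prod := by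
  intro j
  induction j with
  | zero =>
      intro _ m
      have he : (Finset.univ.filter fun i : Fin n => i.val < 0) = ∅ := by
        ext i; simp
      rw [he]
      cases m with
      | zero => simp [Lam, LamL]
      | succ m =>
          rw [Finset.powersetCard_eq_empty.mpr (by simp)]
          simp [Lam, LamL]
  | succ j ih =>
      intro hj m
      have hjn : j < n := hj
      set b : Fin n := ⟨j, hjn⟩ with hb
      set A : Finset (Fin n) := Finset.univ.filter fun i : Fin n => i.val < j with hA
      have hAIio : A = Finset.Iio b := by
        ext i; simp [hA, hb, Fin.lt_def, -Fin.val_fin_lt]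
      have hbA : b ∉ A := by simp [hA, hb]
      have hmax : ∀ x ∈ A, x < b := by
        intro x hx; rw [hAIio] at hx; simpa using hx
      have hins : (Finset.univ.filter fun i : Fin n => i.val < j + 1) = insert b A := by
        ext i
        simp only [Finset.mem_filter, Finset.mem_univ, true_and, Finset.mem_insert, hA, hb]
        constructor
        · intro hlt
          rcases Nat.lt_succ_iff_lt_or_eq.mp hlt with h | h
          · exact Or.inr (by simp [h])
          · exact Or.inl (Fin.ext h)
        · rintro (rfl | h)
          · exact Nat.lt_succ_self j
          · exact Nat.lt_succ_of_lt h
      rw [hins]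
      have hsort : Finset.sort (insert b A) (· ≤ ·) = Finset.sort A (· ≤ ·) ++ [b] :=
        sort_insert_max (n := n) hmax
      cases m with
      | zero =>
          rw [Finset.powersetCard_zero]
          simp [Lam, LamL]
      | succ m =>
          have hIH1 := ih (le_of_lt hjn) (m + 1)
          have hIH2 := ih (le_of_lt hjn) m
          rw [Lam, hsort, LamL_append k n _ m b (Finset.sort_nodup _ _) (by simpa using hbA),
            Finset.sort_toFinset]
          have hzy : z k n A b = y k n b := by rw [hAIio]; rfl
          rw [hzy, ← Lam, ← Lam, hIH1, hIH2]
          -- RHS side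
          rw [Finset.powersetCard_succ_insert hbA m]
          rw [Finset.sum_union (by
            rw [Finset.disjoint_left]
            intro S hS hS'
            rw [Finset.mem_powersetCard] at hS
            rcases Finset.mem_image.mp hS' with ⟨T, hT, rfl⟩
            exact hbA (hS.1 (Finset.mem_insert_self b T)))]
          congr 1
          rw [Finset.sum_image (by
            intro T hT T' hT' hTT'
            rw [Finset.mem_coe, Finset.mem_powersetCard] at hT hT'
            have hbT : b ∉ T := fun h => hbA (hT.1 h)
            have hbT' : b ∉ T' := fun h => hbA (hT'.1 h)
            rw [← Finset.erase_insert hbT, ← Finset.erase_insert hbT', hTT'])]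
          rw [Finset.mul_sum]
          apply Finset.sum_congr rfl
          intro T hT
          rw [Finset.mem_powersetCard] at hT
          have hsortT : Finset.sort (insert b T) (· ≤ ·) = Finset.sort T (· ≤ ·) ++ [b] :=
            sort_insert_max (n := n) (fun x hx => hmax x (hT.1 hx))
          rw [hsortT]
          simp


/-- `Λ_m({1,…,n}) = ∑_{i₁ > i₂ > ⋯ > i_m} y_{i₁}·y_{i₂}⋯y_{i_m}`. -/
theorem stmt12 (k : Type) [Field k] (n : ℕ) (m : ℕ) :
    Lam k n m Finset.univ
      = ∑ S ∈ Finset.powersetCard m (Finset.univ : Finset (Fin n)),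
          ((S.sort (· ≤ ·)).reverse.map (y k n)).prod := by
  have h := main_aux k n n le_rfl m
  have huniv : (Finset.univ.filter fun i : Fin n => i.val < n) = Finset.univ := by
    ext i; simp [i.isLt]
  rwa [huniv] at h
end QnPaper
end
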